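/- Let X and Y be nonempty Hausdorff topological spaces. If the product space X × Y is T-locally compact, then both X and Y are T-locally compact. -/
import Mathlib


def TLocallyCompact (X : Type*) [TopologicalSpace X] : Prop :=
  ∀ (x : X) (U : Set X), IsOpen U → x ∈ U →
    ∃ V : Set X, IsOpen V ∧ x ∈ V ∧ V ⊆ U ∧ IsCompact (frontier V)

theorem tLocallyCompact_of_prod_t2 (X Y : Type*) [TopologicalSpace X]
    [TopologicalSpace Y] [T2Space X] [T2Space Y] [Nonempty X] [Nonempty Y]
    (h : TLocallyCompact (X × Y)) : TLocallyCompact X ∧ TLocallyCompact Y := by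
  constructor
  · intro x U hU hxU
    obtain y := Classical.arbitrary Y
    obtain ⟨W, hWo, hxyW, hWsub, hWc⟩ :=
      h (x, y) (U ×ˢ Set.univ) (hU.prod isOpen_univ) ⟨hxU, trivial⟩
    have hcont : Continuous fun a : X => (a, y) := Continuous.prodMk_left y
    set V : Set X := {a | (a, y) ∈ W} with hVdef
    have hVo : IsOpen V := hWo.preimage hcont
    refine ⟨V, hVo, hxyW, fun a ha => (hWsub ha).1, ?_⟩
    have hfr : frontier V ⊆ (fun a : X => (a, y)) ⁻¹' frontier W := by
      intro a ha
      have h1 : closure V ⊆ (fun a : X => (a, y)) ⁻¹' closure W :=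
        hcont.closure_preimage_subset W
      have h2 : a ∉ V := by
        intro haV
        exact ha.2 (by rwa [hVo.interior_eq])
      exact ⟨h1 ha.1, fun hmem => h2 (by rwa [hWo.interior_eq] at hmem)⟩
    have hsub : (frontier V) ×ˢ ({y} : Set Y) ⊆ frontier W := by
      rintro ⟨a, b⟩ ⟨ha, hb⟩
      rcases hb with rfl
      exact hfr ha
    have hcmp : IsCompact ((frontier V) ×ˢ ({y} : Set Y)) :=
      hWc.of_isClosed_subset (isClosed_frontier.prod isClosed_singleton) hsub
    have himg : Prod.fst '' ((frontier V) ×ˢ ({y} : Set Y)) = frontier V :=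
      Set.fst_image_prod _ ⟨y, rfl⟩
    rw [← himg]
    exact hcmp.image continuous_fst
  · intro y U hU hyU
    obtain x := Classical.arbitrary X
    obtain ⟨W, hWo, hxyW, hWsub, hWc⟩ :=
      h (x, y) (Set.univ ×ˢ U) (isOpen_univ.prod hU) ⟨trivial, hyU⟩
    have hcont : Continuous fun b : Y => (x, b) := Continuous.prodMk_right x
    set V : Set Y := {b | (x, b) ∈ W} with hVdef
    have hVo : IsOpen V := hWo.preimage hcont
    refine ⟨V, hVo, hxyW, fun b hb => (hWsub hb).2, ?_⟩
    have hfr : frontier V ⊆ (fun b : Y => (x, b)) ⁻¹' frontier W := by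
      intro b hb
      have h1 : closure V ⊆ (fun b : Y => (x, b)) ⁻¹' closure W :=
        hcont.closure_preimage_subset W
      have h2 : b ∉ V := by
        intro hbV
        exact hb.2 (by rwa [hVo.interior_eq])
      exact ⟨h1 hb.1, fun hmem => h2 (by rwa [hWo.interior_eq] at hmem)⟩
    have hsub : ({x} : Set X) ×ˢ (frontier V) ⊆ frontier W := by
      rintro ⟨a, b⟩ ⟨ha, hb⟩
      rcases ha with rfl
      exact hfr hb
    have hcmp : IsCompact (({x} : Set X) ×ˢ (frontier V)) :=
      hWc.of_isClosed_subset (isClosed_singleton.prod isClosed_frontier) hsub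
    have himg : Prod.snd '' (({x} : Set X) ×ˢ (frontier V)) = frontier V :=
      Set.snd_image_prod (Set.singleton_nonempty x) _
    rw [← himg]
    exact hcmp.image continuous_snd
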